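/- Let I be a finite subset of [0,1] with 0 ∈ I, write I⁺ = I \ {0}, let C be an arbitrary type, and let H : C → I⁺ → ℕ be a family of functions. Define Gen : ℕ → [0,1] by Gen(n) = sup { t ∈ I⁺ : there exists c ∈ C with H(c)(t) = n }. Assume that for every t ∈ I⁺ the set {n ∈ ℕ : ∃ c ∈ C, H(c)(t) = n} is recursively enumerable. Then for every t₀ ∈ (0,1], the t₀-level {n ∈ ℕ : Gen(n) ≥ t₀} is a recursively enumerable subset of ℕ; that is, Gen is a recursively enumerable finite-valued fuzzy subset of ℕ. -/

import Mathlib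

lemma myRePred.or {α} [Primcodable α] {p q : α → Prop}
    (hp : REPred p) (hq : REPred q) : REPred (fun a => p a ∨ q a) := by
  obtain ⟨k, hk, Hk⟩ := Partrec.merge' hp hq
  exact hk.dom_re.of_eq fun a => by
    rw [(Hk a).2]
    simp [Part.assert]

lemma myRePred.finsetOr {α} [Primcodable α] {β : Type*} (s : Finset β)
    (p : β → α → Prop) (hp : ∀ b ∈ s, REPred (p b)) :
    REPred (fun a => ∃ b ∈ s, p b a) := by
  classical
  induction s using Finset.induction with
  | empty =>
      have : REPred (fun _ : α => False) :=
        (ComputablePred.computable_iff.2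
          ⟨fun _ => false, Computable.const _, by simp⟩).to_re
      exact this.of_eq (by simp)
  | @insert b t hb ih =>
      have h1 : REPred (p b) := hp b (Finset.mem_insert_self b t)
      have h2 := ih (fun b' hb' => hp b' (Finset.mem_insert_of_mem hb'))
      exact (myRePred.or h1 h2).of_eq fun a => by simp [or_and_left]

/-- If each fiber {n | ∃ c, H c t = n} (t ∈ I⁺) is recursively enumerable, then
every t₀-level of Gen with t₀ ∈ (0,1] is recursively enumerable; moreover Gen is
finite-valued. -/
theorem stmt_5 {C : Type*} (I : Set ℝ) (hIfin : I.Finite)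
    (hI : I ⊆ Set.Icc (0:ℝ) 1) (h0 : (0:ℝ) ∈ I)
    (H : C → ℝ → ℕ)
    (Gen : ℕ → ℝ)
    (hGen : ∀ n : ℕ, Gen n = sSup {t : ℝ | t ∈ I \ {0} ∧ ∃ c : C, H c t = n})
    (hRE : ∀ t ∈ I \ {0}, REPred (fun n : ℕ => ∃ c : C, H c t = n)) :
    (∀ t₀ : ℝ, 0 < t₀ → t₀ ≤ 1 → REPred (fun n : ℕ => t₀ ≤ Gen n)) ∧
      (Set.range Gen).Finite := by
  classical
  constructor
  · intro t₀ ht₀ _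
    -- the finite set of thresholds
    set T : Finset ℝ := (hIfin.toFinset.filter (fun t => t ≠ 0 ∧ t₀ ≤ t)) with hT
    have key : ∀ n : ℕ, (t₀ ≤ Gen n) ↔ ∃ t ∈ T, ∃ c : C, H c t = n := by
      intro n
      set S : Set ℝ := {t : ℝ | t ∈ I \ {0} ∧ ∃ c : C, H c t = n} with hS
      have hSfin : S.Finite := hIfin.subset (fun t ht => ht.1.1)
      constructor
      · intro hle
        rw [hGen n] at hle
        have hne : S.Nonempty := by
          by_contra hemp
          rw [Set.not_nonempty_iff_eq_empty] at hemp
          rw [show {t : ℝ | t ∈ I \ {0} ∧ ∃ c : C, H c t = n} = S from rfl,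
            hemp, Real.sSup_empty] at hle
          linarith
        have hmem : sSup S ∈ S := hne.csSup_mem hSfin
        refine ⟨sSup S, ?_, hmem.2⟩
        simp only [hT, Finset.mem_filter, Set.Finite.mem_toFinset]
        exact ⟨hmem.1.1, hmem.1.2, hle⟩
      · rintro ⟨t, htT, c, hc⟩
        simp only [hT, Finset.mem_filter, Set.Finite.mem_toFinset] at htT
        have htS : t ∈ S := ⟨⟨htT.1, htT.2.1⟩, c, hc⟩
        have : t ≤ sSup S := le_csSup hSfin.bddAbove htS
        rw [hGen n]
        exact le_trans htT.2.2 this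
    have := myRePred.finsetOr T (fun t n => ∃ c : C, H c t = n) (fun t ht => by
      simp only [hT, Finset.mem_filter, Set.Finite.mem_toFinset] at ht
      exact hRE t ⟨ht.1, ht.2.1⟩)
    exact this.of_eq fun n => (key n).symm
  · have : Set.range Gen ⊆ (fun S : Set ℝ => sSup S) '' {S | S ⊆ I} := by
      rintro x ⟨n, rfl⟩
      exact ⟨_, fun t ht => ht.1.1, (hGen n).symm⟩
    exact ((Set.Finite.finite_subsets hIfin).image _).subset this
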